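/- Let α > 0 and let z ∈ ℂ be such that z is not of the form −1 + iy with y ∈ ℝ and |y| ≥ 2α. Then the function χ_α is complex differentiable at z with derivative χ_α'(z) = (1/2)·log(2α/(1+z+√((1+z)²+4α²))). -/

import Mathlib

open Complex

noncomputable def csqrt (z : ℂ) : ℂ := z ^ (1 / 2 : ℂ)

noncomputable def chi (α : ℝ) (z : ℂ) : ℂ :=
  (1 / 2 : ℂ) * csqrt (4 * (α : ℂ) ^ 2 + (1 + z) ^ 2) +
    (1 + z) / 2 * Complex.log (2 * (α : ℂ) / (1 + z + csqrt (4 * (α : ℂ) ^ 2 + (1 + z) ^ 2)))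

lemma key_cancel (a S w : ℂ) (hS : S ≠ 0) (hwS : w + S ≠ 0) (ha : a ≠ 0) :
    (1 / 2 : ℂ) * ((1 / 2 : ℂ) * S⁻¹ * (2 * w)) +
      w / 2 * ((0 * (w + S) - a * (1 + (1 / 2 : ℂ) * S⁻¹ * (2 * w))) / (w + S) ^ 2 / (a / (w + S))) = 0 := by
  have hP : (w + S) ^ 2 ≠ 0 := pow_ne_zero _ hwS
  have hQ : a / (w + S) ≠ 0 := div_ne_zero ha hwS
  have e : (0 * (w + S) - a * (1 + (1 / 2 : ℂ) * S⁻¹ * (2 * w))) =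
      (-S⁻¹ * (a / (w + S))) * (w + S) ^ 2 := by
    field_simp
    ring
  rw [e, mul_div_cancel_right₀ _ hP, mul_div_cancel_right₀ _ hQ]
  ring

theorem chi_hasDerivAt (α : ℝ) (hα : 0 < α) (z : ℂ)
    (hz : ¬ ∃ y : ℝ, z = -1 + Complex.I * (y : ℂ) ∧ 2 * α ≤ |y|) :
    HasDerivAt (chi α)
      ((1 / 2 : ℂ) *
        Complex.log (2 * (α : ℂ) / (1 + z + csqrt ((1 + z) ^ 2 + 4 * (α : ℂ) ^ 2)))) z := by
  have hα' : (α : ℂ) ≠ 0 := by exact_mod_cast hα.ne'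
  set w : ℂ := 1 + z with hw_def
  set u : ℂ := 4 * (α : ℂ) ^ 2 + w ^ 2 with hu_def
  -- u is in the slit plane
  have hu : u ∈ Complex.slitPlane := by
    rw [Complex.mem_slitPlane_iff]
    by_contra h
    push_neg at h
    obtain ⟨h1, h2⟩ := h
    have him : u.im = 2 * (1 + z.re) * z.im := by
      simp [hu_def, hw_def, Complex.add_im, Complex.add_re, Complex.mul_im, Complex.mul_re,
        pow_two]
      ring
    have hre : u.re = 4 * α ^ 2 + (1 + z.re) ^ 2 - z.im ^ 2 := by
      simp [hu_def, hw_def, Complex.add_im, Complex.add_re, Complex.mul_im, Complex.mul_re,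
        pow_two]
      ring
    rw [him] at h2
    rcases mul_eq_zero.mp h2 with hc' | hc
    · have hc : 1 + z.re = 0 := by linarith
      apply hz
      refine ⟨z.im, ?_, ?_⟩
      · apply Complex.ext <;> simp [Complex.add_re, Complex.add_im] <;> linarith
      · have h3 : 4 * α ^ 2 ≤ z.im ^ 2 := by rw [hre] at h1; nlinarith
        nlinarith [_root_.sq_abs z.im, abs_nonneg z.im]
    · -- z.im = 0
      rw [hre, hc] at h1
      nlinarith
  have hu0 : u ≠ 0 := Complex.slitPlane_ne_zero hu
  set S : ℂ := csqrt u with hS_def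
  have hS2 : S * S = u := by
    rw [hS_def, csqrt, ← Complex.cpow_add _ _ hu0]
    norm_num
  have hS0 : S ≠ 0 := by
    intro h
    rw [h, mul_zero] at hS2
    exact hu0 hS2.symm
  have hwS : w + S ≠ 0 := by
    intro h
    have : S = -w := by linear_combination h
    rw [this] at hS2
    have : 4 * (α : ℂ) ^ 2 = 0 := by linear_combination -hS2
    simp [hα'] at this
  -- the argument of the log is in the slit plane
  have hv : 2 * (α : ℂ) / (w + S) ∈ Complex.slitPlane := by
    rw [Complex.mem_slitPlane_iff]
    by_contra h
    push_neg at h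
    obtain ⟨h1, h2⟩ := h
    set v : ℂ := 2 * (α : ℂ) / (w + S) with hv_def
    have hv0 : v ≠ 0 := by
      rw [hv_def, div_ne_zero_iff]
      constructor
      · simp [hα']
      · exact hwS
    have hvre : v = (v.re : ℂ) := by
      apply Complex.ext <;> simp [h2]
    have hvre0 : v.re ≠ 0 := by
      intro h; rw [h] at hvre; simp at hvre; exact hv0 hvre
    have hvre' : v.re < 0 := lt_of_le_of_ne h1 hvre0
    set r : ℝ := 2 * α / v.re with hr_def
    have hr0 : r < 0 := div_neg_of_pos_of_neg (by positivity) hvre'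
    have hwSr : w + S = (r : ℂ) := by
      rw [hr_def]
      push_cast
      rw [← hvre]
      rw [eq_div_iff hv0, hv_def]
      field_simp
    have hrC : (r : ℂ) ≠ 0 := by exact_mod_cast hr0.ne
    -- w = (r^2 - 4α^2)/(2r)
    have hwc : w = ((r ^ 2 - 4 * α ^ 2) / (2 * r) : ℝ) := by
      have hS' : S = (r : ℂ) - w := by linear_combination hwSr
      have : ((r : ℂ) - w) * ((r : ℂ) - w) = 4 * (α : ℂ) ^ 2 + w ^ 2 := by
        rw [← hS', hS2, hu_def]
      push_cast
      field_simp
      linear_combination (-1 : ℂ) * this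
    set c : ℝ := (r ^ 2 - 4 * α ^ 2) / (2 * r) with hc_def
    have huc : u = ((4 * α ^ 2 + c ^ 2 : ℝ) : ℂ) := by
      rw [hu_def, hwc]; push_cast; ring
    have hucpos : (0 : ℝ) < 4 * α ^ 2 + c ^ 2 := by positivity
    have hSr : S = ((Real.sqrt (4 * α ^ 2 + c ^ 2) : ℝ) : ℂ) := by
      rw [hS_def, csqrt, huc, Real.sqrt_eq_rpow, Complex.ofReal_cpow hucpos.le]
      push_cast
      ring_nf
    have : (r : ℂ) = ((c + Real.sqrt (4 * α ^ 2 + c ^ 2) : ℝ) : ℂ) := by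
      rw [← hwSr, hwc, hSr]; push_cast; ring
    have hr_eq : r = c + Real.sqrt (4 * α ^ 2 + c ^ 2) := by exact_mod_cast this
    have hsq : |c| < Real.sqrt (4 * α ^ 2 + c ^ 2) := by
      rw [← Real.sqrt_sq_eq_abs]
      exact Real.sqrt_lt_sqrt (sq_nonneg c) (by nlinarith)
    have : 0 < r := by
      rw [hr_eq]
      have := neg_abs_le c
      linarith
    linarith
  -- now differentiate
  have hw' : HasDerivAt (fun z : ℂ => 1 + z) 1 z := by
    simpa using (hasDerivAt_id z).const_add (1 : ℂ)
  have hu' : HasDerivAt (fun z : ℂ => 4 * (α : ℂ) ^ 2 + (1 + z) ^ 2) (2 * w) z := by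
    have := ((hw'.pow 2).const_add (4 * (α : ℂ) ^ 2))
    simpa [hw_def, mul_comm] using this
  have hS' : HasDerivAt (fun z : ℂ => csqrt (4 * (α : ℂ) ^ 2 + (1 + z) ^ 2))
      ((1 / 2 : ℂ) * u ^ ((1 / 2 : ℂ) - 1) * (2 * w)) z := by
    have := hu'.cpow_const (c := (1 / 2 : ℂ)) (by simpa [hu_def, hw_def] using hu)
    simpa [csqrt] using this
  have hden : HasDerivAt (fun z : ℂ => 1 + z + csqrt (4 * (α : ℂ) ^ 2 + (1 + z) ^ 2))
      (1 + (1 / 2 : ℂ) * u ^ ((1 / 2 : ℂ) - 1) * (2 * w)) z := hw'.add hS'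
  have hg : HasDerivAt (fun z : ℂ => 2 * (α : ℂ) / (1 + z + csqrt (4 * (α : ℂ) ^ 2 + (1 + z) ^ 2)))
      ((0 * (w + S) - 2 * (α : ℂ) * (1 + (1 / 2 : ℂ) * u ^ ((1 / 2 : ℂ) - 1) * (2 * w))) / (w + S) ^ 2)
      z := by
    have := (hasDerivAt_const z (2 * (α : ℂ))).div hden (by simpa [hw_def, hu_def, hS_def, csqrt] using hwS)
    simpa [hw_def, hu_def, hS_def, csqrt, Pi.div_def] using this
  have hlog : HasDerivAt
      (fun z : ℂ => Complex.log (2 * (α : ℂ) / (1 + z + csqrt (4 * (α : ℂ) ^ 2 + (1 + z) ^ 2))))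
      (((0 * (w + S) - 2 * (α : ℂ) * (1 + (1 / 2 : ℂ) * u ^ ((1 / 2 : ℂ) - 1) * (2 * w))) / (w + S) ^ 2) /
        (2 * (α : ℂ) / (w + S))) z := by
    have := hg.clog (by simpa [hw_def, hu_def, hS_def, csqrt] using hv)
    simpa [hw_def, hu_def, hS_def, csqrt] using this
  have h1 : HasDerivAt (fun z : ℂ => (1 / 2 : ℂ) * csqrt (4 * (α : ℂ) ^ 2 + (1 + z) ^ 2))
      ((1 / 2 : ℂ) * ((1 / 2 : ℂ) * u ^ ((1 / 2 : ℂ) - 1) * (2 * w))) z := hS'.const_mul _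
  have h2 : HasDerivAt (fun z : ℂ => (1 + z) / 2) ((1 : ℂ) / 2) z := by
    simpa using hw'.div_const 2
  have htot := h1.add (h2.mul hlog)
  have hchi : HasDerivAt (chi α)
      ((1 / 2 : ℂ) * ((1 / 2 : ℂ) * u ^ ((1 / 2 : ℂ) - 1) * (2 * w)) +
        ((1 / 2 : ℂ) * Complex.log (2 * (α : ℂ) / (w + S)) +
          w / 2 *
            (((0 * (w + S) - 2 * (α : ℂ) * (1 + (1 / 2 : ℂ) * u ^ ((1 / 2 : ℂ) - 1) * (2 * w))) / (w + S) ^ 2) /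
              (2 * (α : ℂ) / (w + S))))) z := by
    convert htot using 2
    · rfl
    · rfl
    · ext x; simp [chi, hw_def, hu_def, hS_def]
  convert hchi using 1
  have hpow : u ^ ((1 / 2 : ℂ) - 1) = S⁻¹ := by
    have : (1 / 2 : ℂ) - 1 = -(1 / 2) := by norm_num
    rw [this, Complex.cpow_neg, hS_def, csqrt]
  rw [hpow]
  have harg : (1 + z) ^ 2 + 4 * (α : ℂ) ^ 2 = u := by rw [hu_def, hw_def]; ring
  rw [harg, ← hS_def]
  have hkey := key_cancel (2 * (α : ℂ)) S w hS0 hwS (by simp [hα'])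
  linear_combination -hkey
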